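/- Let C be an F_2F_4-additive code generated over F_2 by vectors V_1,…,V_l such that ⟨V_i,V_j⟩₄ = 0 for all i ≠ j and ⟨V_i,V_i⟩₄ ≠ 0 for all i. Then C is an ACD code, i.e., C ∩ C^⊥ = {0}. -/
import Mathlib

abbrev F4 : Type := GaloisField 2 2

/-- The inner product `⟨u,v⟩₄ = ω·Σ aᵢcᵢ + Σ bⱼdⱼ` on `F_2^α × F_4^β`. -/
noncomputable def inner4 {α β : ℕ} (ω : F4)
    (u v : (Fin α → ZMod 2) × (Fin β → F4)) : F4 :=
  ω * ∑ i, algebraMap (ZMod 2) F4 (u.1 i * v.1 i) + ∑ j, u.2 j * v.2 j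

lemma inner4_add_left {α β : ℕ} (ω : F4) (x y u : (Fin α → ZMod 2) × (Fin β → F4)) :
    inner4 ω (x + y) u = inner4 ω x u + inner4 ω y u := by
  simp only [inner4, Prod.fst_add, Prod.snd_add, Pi.add_apply, add_mul, map_add,
    Finset.sum_add_distrib, mul_add]
  ring

lemma inner4_smul_left {α β : ℕ} (ω : F4) (c : ZMod 2)
    (x u : (Fin α → ZMod 2) × (Fin β → F4)) :
    inner4 ω (c • x) u = c • inner4 ω x u := by
  simp only [inner4, Prod.smul_fst, Prod.smul_snd, Pi.smul_apply]
  simp only [smul_eq_mul, Algebra.smul_def, map_mul, mul_assoc, ← Finset.mul_sum]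
  ring

noncomputable def innerL {α β : ℕ} (ω : F4) (u : (Fin α → ZMod 2) × (Fin β → F4)) :
    ((Fin α → ZMod 2) × (Fin β → F4)) →ₗ[ZMod 2] F4 where
  toFun x := inner4 ω x u
  map_add' x y := inner4_add_left ω x y u
  map_smul' c x := inner4_smul_left ω c x u

/-- If `⟨Vᵢ,Vⱼ⟩₄ = 0` for `i ≠ j` and `⟨Vᵢ,Vᵢ⟩₄ ≠ 0`, then the `F_2`-span `C` of the `Vᵢ` is an ACD code: `C ∩ C^⊥ = {0}`. -/
theorem stmt_10 (α β l : ℕ) (ω : F4) (hω : ω ^ 2 + ω + 1 = 0)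
    (V : Fin l → (Fin α → ZMod 2) × (Fin β → F4))
    (hoff : ∀ i j, i ≠ j → inner4 ω (V i) (V j) = 0)
    (hdiag : ∀ i, inner4 ω (V i) (V i) ≠ 0) :
    ∀ x ∈ Submodule.span (ZMod 2) (Set.range V),
      (∀ u ∈ Submodule.span (ZMod 2) (Set.range V), inner4 ω x u = 0) → x = 0 := by
  intro x hx h
  obtain ⟨c, rfl⟩ := (Submodule.mem_span_range_iff_exists_fun (ZMod 2)).mp hx
  have hc : ∀ j, c j = 0 := by
    intro j
    have hj : inner4 ω (∑ i, c i • V i) (V j) = 0 :=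
      h (V j) (Submodule.subset_span ⟨j, rfl⟩)
    have : (innerL ω (V j)) (∑ i, c i • V i) = c j • inner4 ω (V j) (V j) := by
      rw [map_sum, Finset.sum_eq_single j]
      · simp [innerL]
      · intro b _ hb
        simp [innerL, inner4_smul_left, hoff b j hb]
      · simp
    rw [show (innerL ω (V j)) (∑ i, c i • V i) = inner4 ω (∑ i, c i • V i) (V j) from rfl,
      hj] at this
    by_contra hcj
    have h1 : c j = 1 := by
      have hall : ∀ a : ZMod 2, a ≠ 0 → a = 1 := by decide
      exact hall _ hcj
    rw [h1, one_smul] at this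
    exact hdiag j this.symm
  simp [hc]
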